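/- Let 0 < ρ < 1 and (g_n)_{n≥1} a complex sequence with limsup_{n→∞} |g_n|²/(n ρ^n) = ∞. Then limsup_{δ→0⁺} Σ_{n≥1} δ|g_n|²/(n(δ² + ρ^{2n})) = ∞. -/

import Mathlib

open Filter Topology

/-- If limsup |g_n|²/(n ρ^n) = ∞ then
limsup_{δ→0⁺} Σ_{n≥1} δ|g_n|²/(n(δ²+ρ^{2n})) = ∞. -/
theorem stmt5 (ρ : ℝ) (hρ : 0 < ρ) (hρ1 : ρ < 1) (g : ℕ → ℂ)
    (hlimsup : Filter.limsup
      (fun n : ℕ => ENNReal.ofReal (‖g n‖ ^ 2 / (n * ρ ^ n))) atTop = ⊤) :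
    Filter.limsup (fun δ : ℝ => ∑' n : ℕ, ENNReal.ofReal
        (δ * ‖g (n + 1)‖ ^ 2 / ((n + 1) * (δ ^ 2 + ρ ^ (2 * (n + 1))))))
      (𝓝[>] (0 : ℝ)) = ⊤ := by
  set F : ℝ → ENNReal := fun δ : ℝ => ∑' n : ℕ, ENNReal.ofReal
        (δ * ‖g (n + 1)‖ ^ 2 / ((n + 1) * (δ ^ 2 + ρ ^ (2 * (n + 1))))) with hF
  apply ENNReal.eq_top_of_forall_nnreal_le
  intro r
  refine le_limsup_of_frequently_le ?_
  -- frequently in atTop, 2r < f n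
  have hfreq : ∃ᶠ m in atTop, ((2 * r : NNReal) : ENNReal) <
      ENNReal.ofReal (‖g m‖ ^ 2 / (m * ρ ^ m)) := by
    apply Filter.frequently_lt_of_lt_limsup (Filter.isCobounded_le_of_bot)
    
    rw [hlimsup]; exact ENNReal.coe_lt_top
  rw [Filter.frequently_iff]
  intro s hs
  obtain ⟨u, hu, hsub⟩ := mem_nhdsGT_iff_exists_Ioo_subset.1 hs
  have hten : Tendsto (fun m : ℕ => ρ ^ m) atTop (𝓝 0) :=
    tendsto_pow_atTop_nhds_zero_of_lt_one hρ.le hρ1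
  have hev : ∀ᶠ m in atTop, ρ ^ m < u ∧ 1 ≤ m := by
    filter_upwards [hten.eventually_lt_const hu, Filter.eventually_ge_atTop 1] with m h1 h2
    exact ⟨h1, h2⟩
  obtain ⟨m, hlt, hmu, hm1⟩ := (hfreq.and_eventually hev).exists
  refine ⟨ρ ^ m, hsub ⟨pow_pos hρ m, hmu⟩, ?_⟩
  -- now show r ≤ F (ρ ^ m)
  have hmpos : (0 : ℝ) < m := by exact_mod_cast hm1
  have hterm : F (ρ ^ m) ≥ ENNReal.ofReal
      (ρ ^ m * ‖g (m - 1 + 1)‖ ^ 2 /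
        ((↑(m - 1) + 1) * ((ρ ^ m) ^ 2 + ρ ^ (2 * (m - 1 + 1))))) := ENNReal.le_tsum (m - 1)
  have hcast : ((m - 1 : ℕ) : ℝ) + 1 = m := by
    have : m - 1 + 1 = m := Nat.sub_add_cancel hm1
    exact_mod_cast congrArg (Nat.cast : ℕ → ℝ) this
  rw [Nat.sub_add_cancel hm1, hcast] at hterm
  set A : ℝ := ‖g m‖ ^ 2 with hA
  have hAnn : 0 ≤ A := by positivity
  have hx : ρ ^ m * A / ((m : ℝ) * ((ρ ^ m) ^ 2 + ρ ^ (2 * m)))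
      = A / ((m : ℝ) * ρ ^ m) / 2 := by
    have h1 : (ρ ^ m) ^ 2 = ρ ^ (2 * m) := by
      rw [← pow_mul, mul_comm]
    rw [h1]
    have hp : (0 : ℝ) < ρ ^ m := pow_pos hρ m
    field_simp
    ring
  rw [hx] at hterm
  refine le_trans ?_ hterm
  -- r ≤ ofReal (x / 2) where 2r < ofReal x
  set x : ℝ := A / ((m : ℝ) * ρ ^ m) with hxdef
  have hxnn : 0 ≤ x := by positivity
  have h2 : ENNReal.ofReal x = 2 * ENNReal.ofReal (x / 2) := by
    rw [← ENNReal.ofReal_ofNat 2, ← ENNReal.ofReal_mul (by norm_num)]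
    congr 1; ring
  have hlt' : ((2 * r : NNReal) : ENNReal) < ENNReal.ofReal x := hlt
  rw [h2, ENNReal.coe_mul] at hlt'
  have : ((2 : NNReal) : ENNReal) = 2 := by simp
  rw [this] at hlt'
  have := (ENNReal.mul_lt_mul_iff_right (by norm_num) (by norm_num)).1 hlt'
  exact this.le
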